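/- Let Φ : ℝ^K → ℝ^K be a linear operator with adjoint Φ*, D : ℝ^K → ℝ ∪ {∞} a proper lower semicontinuous convex function, C ⊆ ℝ^K a nonempty closed convex set with indicator function ι_C, and A : ℝ^K → 2^{ℝ^K} a maximally monotone operator whose resolvent J = (Id + A)⁻¹ is single-valued and defined on all of ℝ^K. Let γ₁ > 0 and γ₂ > 0 satisfy 1/γ₁ − γ₂(‖Φ‖²_op + 1) > 0, and let (ρ_n) satisfy ρ_n ∈ (0, 2) for all n and Σ_n ρ_n(2 − ρ_n) = ∞. Assume there exists (x̂, ŷ¹, ŷ²) ∈ ℝ^K × ℝ^K × ℝ^K with 0 ∈ γ₁⁻¹A(x̂) + Φ*ŷ¹ + ŷ², 0 ∈ −Φx̂ + ∂D*(ŷ¹), and 0 ∈ −x̂ + ∂ι_C*(ŷ²). Then for any initialization, the sequence (x_n, y¹_n, y²_n) generated by x̃_{n+1} = J(x_n − γ₁(Φ*y¹_n + y²_n)), ỹ¹_{n+1} = prox_{γ₂D*}(y¹_n + γ₂Φ(2x̃_{n+1} − x_n)), ỹ²_{n+1} = prox_{γ₂ι_C*}(y²_n + γ₂(2x̃_{n+1}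 − x_n)), x_{n+1} = ρ_n x̃_{n+1} + (1 − ρ_n)x_n, y¹_{n+1} = ρ_n ỹ¹_{n+1} + (1 − ρ_n)y¹_n, y²_{n+1} = ρ_n ỹ²_{n+1} + (1 − ρ_n)y²_n converges to a triple (x*, y¹*, y²*) satisfying the three inclusions above. -/

import Mathlib

open Filter Topology RealInnerProductSpace

noncomputable section

/-- A set-valued operator on a real inner product space is monotone. -/
def MonotoneOp {H : Type*} [NormedAddCommGroup H] [InnerProductSpace ℝ H]
    (A : H → Set H) : Prop :=
  ∀ ⦃x x' y y' : H⦄, y ∈ A x → y' ∈ A x' → (0 : ℝ) ≤ ⟪x - x', y - y'⟫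

/-- A set-valued operator is maximally monotone if it is monotone and its graph is not
properly contained in the graph of any monotone operator. -/
def MaximallyMonotone {H : Type*} [NormedAddCommGroup H] [InnerProductSpace ℝ H]
    (A : H → Set H) : Prop :=
  MonotoneOp A ∧ ∀ B : H → Set H, MonotoneOp B → (∀ x, A x ⊆ B x) → ∀ x, B x ⊆ A x

/-- Weak convergence of a sequence in a real inner product space. -/
def WeakLim {H : Type*} [NormedAddCommGroup H] [InnerProductSpace ℝ H]
    (z : ℕ → H) (l : H) : Prop :=
  ∀ w : H, Tendsto (fun n => ⟪z n, w⟫) atTop (nhds ⟪l, w⟫)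

/-- Convex conjugate of an extended-real-valued function. -/
def ConjE {H : Type*} [NormedAddCommGroup H] [InnerProductSpace ℝ H]
    (F : H → EReal) (y : H) : EReal :=
  ⨆ x : H, ((⟪x, y⟫ : ℝ) : EReal) - F x

/-- Subdifferential of an extended-real-valued function. -/
def SubdiffE {H : Type*} [NormedAddCommGroup H] [InnerProductSpace ℝ H]
    (F : H → EReal) (x : H) : Set H :=
  {u | ∀ y, F x + ((⟪u, y - x⟫ : ℝ) : EReal) ≤ F y}

/-- Properness of an extended-real-valued function. -/
def ProperE {H : Type*} (F : H → EReal) : Prop :=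
  (∃ x, F x ≠ ⊤) ∧ ∀ x, F x ≠ ⊥

/-- Convexity of an extended-real-valued function. -/
def ConvexE {H : Type*} [AddCommGroup H] [Module ℝ H] (F : H → EReal) : Prop :=
  ∀ x y : H, ∀ a b : ℝ, 0 ≤ a → 0 ≤ b → a + b = 1 →
    F (a • x + b • y) ≤ (a : EReal) * F x + (b : EReal) * F y

/-- `p` is the (unique) minimizer defining `prox_{γ F}(x)`. -/
def IsProxPt {H : Type*} [NormedAddCommGroup H] [InnerProductSpace ℝ H]
    (γ : ℝ) (F : H → EReal) (x p : H) : Prop :=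
  (∀ y, F p + ((1 / (2 * γ) * ‖p - x‖ ^ 2 : ℝ) : EReal)
      ≤ F y + ((1 / (2 * γ) * ‖y - x‖ ^ 2 : ℝ) : EReal)) ∧
  ∀ q, (∀ y, F q + ((1 / (2 * γ) * ‖q - x‖ ^ 2 : ℝ) : EReal)
      ≤ F y + ((1 / (2 * γ) * ‖y - x‖ ^ 2 : ℝ) : EReal)) → q = p

open Classical in
/-- Indicator function of a set, valued in `EReal`: `0` on `C` and `⊤` elsewhere. -/
def indicatorE {H : Type*} (C : Set H) (x : H) : EReal :=
  if x ∈ C then (0 : EReal) else ⊤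

section AuxLemmas

variable {H : Type*} [NormedAddCommGroup H] [InnerProductSpace ℝ H]

lemma aux_le_conj (G : H → EReal) (y x : H) :
    ((⟪x, y⟫ : ℝ) : EReal) - G x ≤ ConjE G y := by
  simp only [ConjE]
  exact le_iSup (fun x : H => ((⟪x, y⟫ : ℝ) : EReal) - G x) x

lemma aux_conj_ne_bot {G : H → EReal} (hG : ProperE G) (y : H) : ConjE G y ≠ ⊥ := by
  obtain ⟨⟨x₀, hx₀⟩, hb⟩ := hG
  have hle := aux_le_conj G y x₀
  have heq : ((⟪x₀, y⟫ : ℝ) : EReal) - G x₀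
      = ((⟪x₀, y⟫ - (G x₀).toReal : ℝ) : EReal) := by
    rw [EReal.coe_sub, EReal.coe_toReal hx₀ (hb x₀)]
  intro hbot
  rw [hbot, le_bot_iff, heq] at hle
  exact (EReal.coe_ne_bot _) hle

lemma aux_conj_convex {G : H → EReal} (hb : ∀ x, G x ≠ ⊥) : ConvexE (ConjE G) := by
  intro y y' a b ha hbnn hab
  have key : ∀ x : H, ((⟪x, a • y + b • y'⟫ : ℝ) : EReal) - G x
      ≤ (a : EReal) * ConjE G y + (b : EReal) * ConjE G y' := by
    intro x
    have h1 := aux_le_conj G y x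
    have h2 := aux_le_conj G y' x
    have hstep : ((⟪x, a • y + b • y'⟫ : ℝ) : EReal) - G x
        ≤ (a : EReal) * (((⟪x, y⟫ : ℝ) : EReal) - G x)
          + (b : EReal) * (((⟪x, y'⟫ : ℝ) : EReal) - G x) := by
      rcases eq_or_ne (G x) ⊤ with ht | ht
      · rw [ht]
        have hbt : ((⟪x, a • y + b • y'⟫ : ℝ) : EReal) - ⊤ = ⊥ := by simp
        rw [hbt]; exact bot_le
      · have hr : G x = ((G x).toReal : EReal) := (EReal.coe_toReal ht (hb x)).symm
        rw [hr]
        rw [inner_add_right, inner_smul_right, inner_smul_right]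
        rw [← EReal.coe_sub, ← EReal.coe_sub, ← EReal.coe_sub, ← EReal.coe_mul,
          ← EReal.coe_mul, ← EReal.coe_add, EReal.coe_le_coe_iff]
        have h3 : (a + b) * (G x).toReal = (G x).toReal := by rw [hab]; ring
        nlinarith [h3]
    refine hstep.trans (add_le_add ?_ ?_)
    · exact mul_le_mul_of_nonneg_left h1 (by exact_mod_cast ha)
    · exact mul_le_mul_of_nonneg_left h2 (by exact_mod_cast hbnn)
  simp only [ConjE]
  exact iSup_le key

lemma aux_conj_lsc (G : H → EReal) : LowerSemicontinuous (ConjE G) := by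
  apply lowerSemicontinuous_iSup
  intro x
  rcases eq_or_ne (G x) ⊤ with ht | ht
  · have h : (fun y : H => ((⟪x, y⟫ : ℝ) : EReal) - G x) = fun _ => ⊥ := by
      funext y; rw [ht]; simp
    rw [h]; exact lowerSemicontinuous_const
  · rcases eq_or_ne (G x) ⊥ with hbt | hbt
    · have h : (fun y : H => ((⟪x, y⟫ : ℝ) : EReal) - G x) = fun _ => ⊤ := by
        funext y; rw [hbt]; simp
      rw [h]; exact lowerSemicontinuous_const
    · have h : (fun y : H => ((⟪x, y⟫ : ℝ) : EReal) - G x)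
          = fun y => ((⟪x, y⟫ - (G x).toReal : ℝ) : EReal) := by
        funext y; rw [EReal.coe_sub, EReal.coe_toReal ht hbt]
      rw [h]
      apply Continuous.lowerSemicontinuous
      exact continuous_coe_real_ereal.comp
        ((continuous_const.inner continuous_id).sub continuous_const)


lemma aux_prox_ne_top {F : H → EReal} (hbot : ∀ y, F y ≠ ⊥) {γ : ℝ} {x p : H}
    (hmin : ∀ y, F p + ((1 / (2 * γ) * ‖p - x‖ ^ 2 : ℝ) : EReal)
      ≤ F y + ((1 / (2 * γ) * ‖y - x‖ ^ 2 : ℝ) : EReal))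
    (hy₀ : ∃ y₀, F y₀ ≠ ⊤) : F p ≠ ⊤ := by
  obtain ⟨y₀, hy₀⟩ := hy₀
  intro htop
  have h := hmin y₀
  rw [htop, EReal.top_add_coe] at h
  have heq : F y₀ + ((1 / (2 * γ) * ‖y₀ - x‖ ^ 2 : ℝ) : EReal)
      = (((F y₀).toReal + 1 / (2 * γ) * ‖y₀ - x‖ ^ 2 : ℝ) : EReal) := by
    rw [EReal.coe_add, EReal.coe_toReal hy₀ (hbot y₀)]
  rw [heq, top_le_iff] at h
  exact (EReal.coe_ne_top _) h

lemma aux_prox_subdiff {F : H → EReal} (hconv : ConvexE F) (hbot : ∀ y, F y ≠ ⊥)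
    {γ : ℝ} (hγ : 0 < γ) {x p : H}
    (hmin : ∀ y, F p + ((1 / (2 * γ) * ‖p - x‖ ^ 2 : ℝ) : EReal)
      ≤ F y + ((1 / (2 * γ) * ‖y - x‖ ^ 2 : ℝ) : EReal)) :
    γ⁻¹ • (x - p) ∈ SubdiffE F p := by
  intro y
  rcases eq_or_ne (F y) ⊤ with hFy | hFy
  · rw [hFy]; exact le_top
  have hFp : F p ≠ ⊤ := aux_prox_ne_top hbot hmin ⟨y, hFy⟩
  set r := (F p).toReal with hrdef
  set s := (F y).toReal with hsdef
  have hFpr : F p = (r : EReal) := (EReal.coe_toReal hFp (hbot p)).symm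
  have hFys : F y = (s : EReal) := (EReal.coe_toReal hFy (hbot y)).symm
  set ip : ℝ := ⟪p - x, y - p⟫ with hipdef
  set Cc : ℝ := 1 / (2 * γ) * ‖y - p‖ ^ 2 with hCdef
  have hCnn : 0 ≤ Cc := by
    apply mul_nonneg
    · positivity
    · positivity
  have hstep : ∀ t : ℝ, 0 < t → t ≤ 1 → r ≤ s + γ⁻¹ * ip + t * Cc := by
    intro t ht ht1
    have hconvt := hconv p y (1 - t) t (by linarith) ht.le (by ring)
    have hmix : F ((1 - t) • p + t • y) ≤ (((1 - t) * r + t * s : ℝ) : EReal) := by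
      refine hconvt.trans ?_
      rw [hFpr, hFys, ← EReal.coe_mul, ← EReal.coe_mul, ← EReal.coe_add]
    have hminyt := hmin ((1 - t) • p + t • y)
    have hle : ((r + 1 / (2 * γ) * ‖p - x‖ ^ 2 : ℝ) : EReal)
        ≤ (((1 - t) * r + t * s + 1 / (2 * γ) * ‖(1 - t) • p + t • y - x‖ ^ 2 : ℝ) : EReal) := by
      rw [EReal.coe_add, EReal.coe_add, ← hFpr]
      exact hminyt.trans (add_le_add_left hmix _)
    rw [EReal.coe_le_coe_iff] at hle
    have hnorm : ‖(1 - t) • p + t • y - x‖ ^ 2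
        = ‖p - x‖ ^ 2 + 2 * t * ip + t ^ 2 * ‖y - p‖ ^ 2 := by
      have hv : (1 - t) • p + t • y - x = (p - x) + t • (y - p) := by module
      rw [hv, @norm_add_sq_real, norm_smul, inner_smul_right]
      simp only [Real.norm_eq_abs, abs_of_pos ht, hipdef]
      ring
    rw [hnorm] at hle
    have hexp : 1 / (2 * γ) * (‖p - x‖ ^ 2 + 2 * t * ip + t ^ 2 * ‖y - p‖ ^ 2)
        = 1 / (2 * γ) * ‖p - x‖ ^ 2 + t * (γ⁻¹ * ip) + t ^ 2 * Cc := by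
      rw [hCdef]; field_simp
    have hle2 : t * r ≤ t * s + t * (γ⁻¹ * ip) + t ^ 2 * Cc := by
      rw [hexp] at hle; linarith
    nlinarith [hle2, ht]
  have hkey : r + γ⁻¹ * ⟪x - p, y - p⟫ ≤ s := by
    have hip' : ⟪x - p, y - p⟫ = -ip := by
      rw [hipdef, ← inner_neg_left, neg_sub]
    rw [hip']
    by_contra hcon
    push_neg at hcon
    set δ := r + γ⁻¹ * (-ip) - s with hδ
    have hδpos : 0 < δ := by rw [hδ]; linarith
    set t := min 1 (δ / (2 * (Cc + 1))) with htdef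
    have ht0 : 0 < t := by
      apply lt_min one_pos
      positivity
    have ht1 : t ≤ 1 := min_le_left _ _
    have h := hstep t ht0 ht1
    have htle : t ≤ δ / (2 * (Cc + 1)) := min_le_right _ _
    have : t * Cc ≤ δ / 2 := by
      have h1 : t * Cc ≤ (δ / (2 * (Cc + 1))) * Cc := by
        apply mul_le_mul_of_nonneg_right htle hCnn
      have h2 : (δ / (2 * (Cc + 1))) * Cc ≤ δ / 2 := by
        rw [div_mul_eq_mul_div, div_le_div_iff₀ (by positivity) (by norm_num)]
        nlinarith
      linarith
    linarith
  rw [hFpr, hFys, real_inner_smul_left, ← EReal.coe_add, EReal.coe_le_coe_iff]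
  linarith [hkey]

lemma aux_subdiff_mono {F : H → EReal} (hbot : ∀ y, F y ≠ ⊥) {a b u v : H}
    (hu : u ∈ SubdiffE F a) (hv : v ∈ SubdiffE F b) (ha : F a ≠ ⊤) :
    (0:ℝ) ≤ ⟪a - b, u - v⟫ := by
  have hFa : F a = ((F a).toReal : EReal) := (EReal.coe_toReal ha (hbot a)).symm
  have hb : F b ≠ ⊤ := by
    intro htop
    have h := hv a
    rw [htop, EReal.top_add_coe, top_le_iff] at h
    rw [h] at hFa
    exact (EReal.coe_ne_top _) (by rw [← hFa])
  have hFb : F b = ((F b).toReal : EReal) := (EReal.coe_toReal hb (hbot b)).symm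
  have h1 := hu b
  have h2 := hv a
  rw [hFa, hFb, ← EReal.coe_add, EReal.coe_le_coe_iff] at h1 h2
  have : ⟪u, b - a⟫ + ⟪v, a - b⟫ ≤ 0 := by linarith
  have hsplit : ⟪a - b, u - v⟫ = -(⟪u, b - a⟫ + ⟪v, a - b⟫) := by
    simp only [inner_sub_left, inner_sub_right]
    rw [real_inner_comm u b, real_inner_comm u a, real_inner_comm v a, real_inner_comm v b]
    ring
  rw [hsplit]; linarith

lemma aux_subdiff_not_all_top {F : H → EReal} [Nontrivial H] {γ : ℝ} {x p : H}
    (h : IsProxPt γ F x p) : ∃ y, F y ≠ ⊤ := by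
  by_contra hcon
  push_neg at hcon
  obtain ⟨q, hq⟩ := exists_ne p
  have : q = p := h.2 q (fun y => by
    rw [hcon y, hcon q, EReal.top_add_coe, EReal.top_add_coe])
  exact hq this

lemma aux_subdiff_seq_closed {F : H → EReal} (hlsc : LowerSemicontinuous F)
    (hbot : ∀ y, F y ≠ ⊥) {pk uk : ℕ → H} {p u : H}
    (hmem : ∀ k, uk k ∈ SubdiffE F (pk k))
    (hp : Tendsto pk atTop (𝓝 p)) (hu : Tendsto uk atTop (𝓝 u)) :
    u ∈ SubdiffE F p := by
  intro y
  rcases eq_or_ne (F y) ⊤ with hFy | hFy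
  · rw [hFy]; exact le_top
  set s := (F y).toReal with hs
  have hFys : F y = (s : EReal) := (EReal.coe_toReal hFy (hbot y)).symm
  set c : ℝ := ⟪u, y - p⟫ with hc
  -- inner products converge
  have hipc : Tendsto (fun k => (⟪uk k, y - pk k⟫ : ℝ)) atTop (𝓝 c) := by
    rw [hc]
    exact hu.inner (tendsto_const_nhds.sub hp)
  -- show F p + c ≤ s
  have hgoal : F p + (c : EReal) ≤ (s : EReal) := by
    by_contra hcon
    push_neg at hcon
    have hlt : ((s - c : ℝ) : EReal) < F p := by
      by_contra hle
      push_neg at hle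
      have h4 : F p + (c : EReal) ≤ ((s - c : ℝ) : EReal) + (c : EReal) :=
        add_le_add_left hle _
      rw [← EReal.coe_add] at h4
      simp only [sub_add_cancel] at h4
      exact absurd h4 (not_le.mpr hcon)
    obtain ⟨bE, hb1, hb2⟩ := exists_between hlt
    have hbne_top : bE ≠ ⊤ := hb2.ne_top
    have hbne_bot : bE ≠ ⊥ := by
      intro h; rw [h] at hb1; exact absurd hb1 (by simp)
    set b := bE.toReal with hbdef
    have hbE : bE = (b : EReal) := (EReal.coe_toReal hbne_top hbne_bot).symm
    rw [hbE] at hb1 hb2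
    rw [EReal.coe_lt_coe_iff] at hb1
    have hev : ∀ᶠ k in atTop, ((b : ℝ) : EReal) < F (pk k) := hp.eventually (hlsc p _ hb2)
    have hub : ∀ k, F (pk k) + ((⟪uk k, y - pk k⟫ : ℝ) : EReal) ≤ (s : EReal) := by
      intro k
      rw [← hFys]; exact hmem k y
    have hevr : ∀ᶠ k in atTop, b + ⟪uk k, y - pk k⟫ ≤ s := by
      filter_upwards [hev] with k hk
      have h2 : ((b : ℝ) : EReal) + ((⟪uk k, y - pk k⟫ : ℝ) : EReal)
          ≤ F (pk k) + ((⟪uk k, y - pk k⟫ : ℝ) : EReal) := add_le_add_left hk.le _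
      have h3 := h2.trans (hub k)
      rw [← EReal.coe_add, EReal.coe_le_coe_iff] at h3
      exact h3
    have hlim : b + c ≤ s :=
      le_of_tendsto (tendsto_const_nhds.add hipc) hevr
    linarith
  rw [← hFys] at hgoal
  calc F p + (c : EReal) ≤ F y := hgoal


lemma aux_mm_of_forall {A : H → Set H} (hA : MaximallyMonotone A) {p a : H}
    (h : ∀ x' y', y' ∈ A x' → (0:ℝ) ≤ ⟪p - x', a - y'⟫) : a ∈ A p := by
  set B : H → Set H := fun w => A w ∪ {v | w = p ∧ v = a} with hB
  have hmono : MonotoneOp B := by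
    intro x x' yy yy' h1 h2
    rcases h1 with h1 | h1 <;> rcases h2 with h2 | h2
    · exact hA.1 h1 h2
    · obtain ⟨he1, he2⟩ := h2
      rw [he1, he2]
      have := h x yy h1
      rw [show x - p = -(p - x) by abel, show yy - a = -(a - yy) by abel,
        inner_neg_neg]
      exact this
    · obtain ⟨he1, he2⟩ := h1
      rw [he1, he2]
      exact h x' yy' h2
    · obtain ⟨he1, he2⟩ := h1
      obtain ⟨he3, he4⟩ := h2
      rw [he1, he2, he3, he4]
      simp
  have hsub : ∀ w, A w ⊆ B w := fun w => Set.subset_union_left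
  have := hA.2 B hmono hsub p
  exact this (Or.inr ⟨rfl, rfl⟩)

lemma aux_mm_seq_closed {A : H → Set H} (hA : MaximallyMonotone A)
    {pk ak : ℕ → H} {p a : H} (hm : ∀ k, ak k ∈ A (pk k))
    (hp : Tendsto pk atTop (𝓝 p)) (ha : Tendsto ak atTop (𝓝 a)) : a ∈ A p := by
  apply aux_mm_of_forall hA
  intro x' y' hy'
  have hev : ∀ k, (0:ℝ) ≤ ⟪pk k - x', ak k - y'⟫ := fun k => hA.1 (hm k) hy'
  have hlim : Tendsto (fun k => (⟪pk k - x', ak k - y'⟫ : ℝ)) atTop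
      (𝓝 ⟪p - x', a - y'⟫) :=
    (hp.sub tendsto_const_nhds).inner (ha.sub tendsto_const_nhds)
  exact ge_of_tendsto hlim (Eventually.of_forall hev)

lemma aux_seq_subseq_zero {s c : ℕ → ℝ} (hs : ∀ n, 0 ≤ s n) (hc : ∀ n, 0 ≤ c n)
    {B : ℝ} (hB : ∀ N, ∑ n ∈ Finset.range N, c n * s n ≤ B)
    (hdiv : Tendsto (fun N => ∑ n ∈ Finset.range N, c n) atTop atTop) :
    ∃ φ : ℕ → ℕ, StrictMono φ ∧ Tendsto (s ∘ φ) atTop (𝓝 0) := by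
  have hfreq : ∀ j : ℕ, ∃ᶠ n in atTop, s n < 1 / (j + 1) := by
    intro j
    set ε : ℝ := 1 / (j + 1) with hε
    have hεpos : 0 < ε := by positivity
    rw [frequently_atTop]
    intro m
    by_contra hcon
    push_neg at hcon
    -- hcon : ∀ n ≥ m, ε ≤ s n
    obtain ⟨N, hN1, hN2⟩ := ((tendsto_atTop.mp hdiv
      ((∑ n ∈ Finset.range m, c n) + (B + 1) / ε)).and (eventually_ge_atTop m)).exists
    have h1 : ∑ n ∈ Finset.Ico m N, c n * s n ≤ ∑ n ∈ Finset.range N, c n * s n := by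
      apply Finset.sum_le_sum_of_subset_of_nonneg
      · intro n hn
        rw [Finset.mem_Ico] at hn
        exact Finset.mem_range.mpr hn.2
      · intro n _ _
        exact mul_nonneg (hc n) (hs n)
    have h2 : ∑ n ∈ Finset.Ico m N, c n * ε ≤ ∑ n ∈ Finset.Ico m N, c n * s n := by
      apply Finset.sum_le_sum
      intro n hn
      rw [Finset.mem_Ico] at hn
      exact mul_le_mul_of_nonneg_left (hcon n hn.1) (hc n)
    have h3 : ∑ n ∈ Finset.Ico m N, c n * ε
        = (∑ n ∈ Finset.range N, c n - ∑ n ∈ Finset.range m, c n) * ε := by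
      rw [← Finset.sum_mul, Finset.sum_Ico_eq_sub _ hN2]
    have h4 : (B + 1) / ε * ε ≤ (∑ n ∈ Finset.range N, c n - ∑ n ∈ Finset.range m, c n) * ε := by
      apply mul_le_mul_of_nonneg_right _ hεpos.le
      linarith
    rw [div_mul_cancel₀ _ (ne_of_gt hεpos)] at h4
    have := hB N
    linarith
  obtain ⟨φ, hφ, hsφ⟩ := Filter.extraction_forall_of_frequently hfreq
  refine ⟨φ, hφ, ?_⟩
  apply squeeze_zero (fun k => hs (φ k)) (fun k => (hsφ k).le)
  exact tendsto_one_div_add_atTop_nhds_zero_nat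

lemma aux_antitone_subseq_zero {d : ℕ → ℝ} (h0 : ∀ n, 0 ≤ d n)
    (hmono : ∀ n, d (n + 1) ≤ d n) {φ : ℕ → ℕ} (hφ : StrictMono φ)
    (hlim : Tendsto (d ∘ φ) atTop (𝓝 0)) : Tendsto d atTop (𝓝 0) := by
  have hanti : Antitone d := antitone_nat_of_succ_le hmono
  rw [Metric.tendsto_atTop]
  intro ε hε
  rw [Metric.tendsto_atTop] at hlim
  obtain ⟨K, hK⟩ := hlim ε hε
  refine ⟨φ K, fun n hn => ?_⟩
  have h1 : d n ≤ d (φ K) := hanti hn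
  have h2 := hK K le_rfl
  simp only [Function.comp_apply, Real.dist_eq, sub_zero] at h2 ⊢
  rw [abs_of_nonneg (h0 (φ K))] at h2
  rw [abs_of_nonneg (h0 n)]
  linarith

lemma aux_amgm (u v s : ℝ) (hs : 0 < s) : 2 * u * v ≤ s * u ^ 2 + s⁻¹ * v ^ 2 := by
  have hkey : s * u ^ 2 + s⁻¹ * v ^ 2 - 2 * u * v = (s * u - v) ^ 2 / s := by
    field_simp; ring
  have h2 : 0 ≤ (s * u - v) ^ 2 / s := div_nonneg (sq_nonneg _) hs.le
  linarith

lemma aux_tendsto_zero_of_inner {u : ℕ → H}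
    (h : Tendsto (fun k => (⟪u k, u k⟫ : ℝ)) atTop (𝓝 0)) :
    Tendsto u atTop (𝓝 0) := by
  rw [tendsto_zero_iff_norm_tendsto_zero]
  have heq : (fun k => ‖u k‖) = fun k => Real.sqrt ⟪u k, u k⟫ := by
    funext k
    rw [real_inner_self_eq_norm_mul_norm, Real.sqrt_mul_self (norm_nonneg _)]
  rw [heq]
  have := (Real.continuous_sqrt.tendsto' 0 0 Real.sqrt_zero).comp h
  exact this


end AuxLemmas

set_option maxHeartbeats 1000000 in
/-- convergence of the PnP-PDS iteration for image restoration with a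
data-fidelity term `D` and a constraint set `C`. -/
theorem pnp_pds_convergence_image_restoration (K : ℕ)
    (Φ : EuclideanSpace ℝ (Fin K) →L[ℝ] EuclideanSpace ℝ (Fin K))
    (D : EuclideanSpace ℝ (Fin K) → EReal)
    (hDproper : ProperE D) (hDlsc : LowerSemicontinuous D) (hDconv : ConvexE D)
    (C : Set (EuclideanSpace ℝ (Fin K)))
    (hCne : C.Nonempty) (hCclosed : IsClosed C) (hCconv : Convex ℝ C)
    (A : EuclideanSpace ℝ (Fin K) → Set (EuclideanSpace ℝ (Fin K)))
    (hA : MaximallyMonotone A)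
    (J : EuclideanSpace ℝ (Fin K) → EuclideanSpace ℝ (Fin K))
    (hJres : ∀ x, x - J x ∈ A (J x))
    (hJuniq : ∀ x p, x - p ∈ A p → p = J x)
    (γ₁ γ₂ : ℝ) (hγ₁ : 0 < γ₁) (hγ₂ : 0 < γ₂)
    (hcond : 1 / γ₁ - γ₂ * (‖Φ‖ ^ 2 + 1) > 0)
    (ρ : ℕ → ℝ) (hρ : ∀ n, ρ n ∈ Set.Ioo (0 : ℝ) 2)
    (hρsum : Tendsto (fun N => ∑ n ∈ Finset.range N, ρ n * (2 - ρ n)) atTop atTop)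
    (hsol : ∃ (xh y1h y2h : EuclideanSpace ℝ (Fin K)),
      (∃ u ∈ A xh, (1 / γ₁) • u + (ContinuousLinearMap.adjoint Φ) y1h + y2h = 0) ∧
      (∃ w ∈ SubdiffE (ConjE D) y1h, -(Φ xh) + w = 0) ∧
      (∃ w ∈ SubdiffE (ConjE (indicatorE C)) y2h, -xh + w = 0))
    (x y1 y2 xt y1t y2t : ℕ → EuclideanSpace ℝ (Fin K))
    (hxt : ∀ n, xt (n + 1) =
      J (x n - γ₁ • ((ContinuousLinearMap.adjoint Φ) (y1 n) + y2 n)))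
    (hy1t : ∀ n, IsProxPt γ₂ (ConjE D)
      (y1 n + γ₂ • Φ ((2 : ℝ) • xt (n + 1) - x n)) (y1t (n + 1)))
    (hy2t : ∀ n, IsProxPt γ₂ (ConjE (indicatorE C))
      (y2 n + γ₂ • ((2 : ℝ) • xt (n + 1) - x n)) (y2t (n + 1)))
    (hx : ∀ n, x (n + 1) = ρ n • xt (n + 1) + (1 - ρ n) • x n)
    (hy1 : ∀ n, y1 (n + 1) = ρ n • y1t (n + 1) + (1 - ρ n) • y1 n)
    (hy2 : ∀ n, y2 (n + 1) = ρ n • y2t (n + 1) + (1 - ρ n) • y2 n) :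
    ∃ (xs y1s y2s : EuclideanSpace ℝ (Fin K)),
      Tendsto x atTop (nhds xs) ∧ Tendsto y1 atTop (nhds y1s) ∧
      Tendsto y2 atTop (nhds y2s) ∧
      (∃ u ∈ A xs, (1 / γ₁) • u + (ContinuousLinearMap.adjoint Φ) y1s + y2s = 0) ∧
      (∃ w ∈ SubdiffE (ConjE D) y1s, -(Φ xs) + w = 0) ∧
      (∃ w ∈ SubdiffE (ConjE (indicatorE C)) y2s, -xs + w = 0) := by
  classical
  obtain ⟨xh, y1h, y2h, hsolA, hsolD, hsolC⟩ := hsol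
  rcases subsingleton_or_nontrivial (EuclideanSpace ℝ (Fin K)) with hsub | hnt
  · -- trivial case: the space is a single point
    refine ⟨xh, y1h, y2h, ?_, ?_, ?_, hsolA, hsolD, hsolC⟩
    · have : x = fun _ => xh := funext fun n => Subsingleton.elim _ _
      rw [this]; exact tendsto_const_nhds
    · have : y1 = fun _ => y1h := funext fun n => Subsingleton.elim _ _
      rw [this]; exact tendsto_const_nhds
    · have : y2 = fun _ => y2h := funext fun n => Subsingleton.elim _ _
      rw [this]; exact tendsto_const_nhds

  -- Main case: the space is nontrivial
  have hg1 : (0:ℝ) < 1 / γ₁ := by positivity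
  have hg2 : (0:ℝ) < γ₂⁻¹ := by positivity
  set g1 : ℝ := 1 / γ₁ with hg1def
  set g2 : ℝ := γ₂⁻¹ with hg2def
  set N : ℝ := ‖Φ‖ with hNdef
  have hN0 : 0 ≤ N := norm_nonneg _
  set S : ℝ := γ₂ * (N ^ 2 + 1) with hSdef
  have hS0 : 0 ≤ S := by rw [hSdef]; positivity
  have hST : S < g1 := by rw [hSdef, hg1def]; nlinarith [hcond]
  set θ : ℝ := (S + g1) / (2 * g1) with hθdef
  have hθpos : 0 < θ := by rw [hθdef]; positivity
  have hθlt1 : θ < 1 := by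
    rw [hθdef, div_lt_one (by linarith)]; linarith
  set s₀ : ℝ := γ₂ / θ with hs₀def
  have hs₀pos : 0 < s₀ := by rw [hs₀def]; positivity
  set α : ℝ := g1 - s₀ * (N ^ 2 + 1) with hαdef
  set β : ℝ := g2 - s₀⁻¹ with hβdef
  have hαpos : 0 < α := by
    rw [hαdef]
    have e : s₀ * (N ^ 2 + 1) = S / θ := by rw [hs₀def, hSdef]; ring
    have e2 : g1 * θ = (S + g1) / 2 := by
      rw [hθdef]; field_simp
    have e3 : S / θ < g1 := by
      rw [div_lt_iff₀ hθpos]; nlinarith [e2, hST]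
    linarith [e, e3]
  have hβpos : 0 < β := by
    rw [hβdef]
    have e : s₀⁻¹ = θ * g2 := by
      rw [hs₀def, hg2def, inv_div, div_eq_mul_inv]
    rw [e]
    nlinarith [mul_pos hg2 (show (0:ℝ) < 1 - θ by linarith)]
  set Q : EuclideanSpace ℝ (Fin K) → EuclideanSpace ℝ (Fin K) →
      EuclideanSpace ℝ (Fin K) → ℝ := fun a b c =>
    g1 * ⟪a, a⟫ + g2 * ⟪b, b⟫ + g2 * ⟪c, c⟫ - 2 * ⟪Φ a, b⟫ - 2 * ⟪a, c⟫ with hQdef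
  have Qlower : ∀ a b c : EuclideanSpace ℝ (Fin K),
      α * ‖a‖ ^ 2 + β * ‖b‖ ^ 2 + β * ‖c‖ ^ 2 ≤ Q a b c := by
    intro a b c
    rw [hαdef, hβdef]
    simp only [hQdef]
    rw [real_inner_self_eq_norm_sq a, real_inner_self_eq_norm_sq b,
      real_inner_self_eq_norm_sq c]
    have h1 : ⟪Φ a, b⟫ ≤ N * ‖a‖ * ‖b‖ := by
      calc ⟪Φ a, b⟫ ≤ ‖Φ a‖ * ‖b‖ := real_inner_le_norm _ _
        _ ≤ (N * ‖a‖) * ‖b‖ :=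
          mul_le_mul_of_nonneg_right (Φ.le_opNorm a) (norm_nonneg b)
        _ = N * ‖a‖ * ‖b‖ := by ring
    have h2 : ⟪a, c⟫ ≤ ‖a‖ * ‖c‖ := real_inner_le_norm _ _
    have h3 := aux_amgm (N * ‖a‖) ‖b‖ s₀ hs₀pos
    have h4 := aux_amgm ‖a‖ ‖c‖ s₀ hs₀pos
    linarith [h1, h2, h3, h4]
  have Qnn : ∀ a b c : EuclideanSpace ℝ (Fin K), 0 ≤ Q a b c := by
    intro a b c
    have := Qlower a b c
    nlinarith [mul_nonneg hαpos.le (sq_nonneg ‖a‖),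
      mul_nonneg hβpos.le (sq_nonneg ‖b‖), mul_nonneg hβpos.le (sq_nonneg ‖c‖)]
  -- facts about the conjugates
  set F1 : EuclideanSpace ℝ (Fin K) → EReal := ConjE D with hF1def
  set F2 : EuclideanSpace ℝ (Fin K) → EReal := ConjE (indicatorE C) with hF2def
  have hCproper : ProperE (indicatorE C) := by
    obtain ⟨c0, hc0⟩ := hCne
    constructor
    · exact ⟨c0, by simp [indicatorE, hc0]⟩
    · intro z
      by_cases hz : z ∈ C <;> simp [indicatorE, hz]
  have hbot1 : ∀ y, F1 y ≠ ⊥ := fun y => aux_conj_ne_bot hDproper y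
  have hbot2 : ∀ y, F2 y ≠ ⊥ := fun y => aux_conj_ne_bot hCproper y
  have hconv1 : ConvexE F1 := aux_conj_convex hDproper.2
  have hconv2 : ConvexE F2 := aux_conj_convex hCproper.2
  have hlsc1 : LowerSemicontinuous F1 := aux_conj_lsc D
  have hlsc2 : LowerSemicontinuous F2 := aux_conj_lsc (indicatorE C)
  have hnt1 : ∃ y, F1 y ≠ ⊤ := aux_subdiff_not_all_top (hy1t 0)
  have hnt2 : ∃ y, F2 y ≠ ⊤ := aux_subdiff_not_all_top (hy2t 0)
  -- membership facts for the iterates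
  have ha : ∀ n, (x n - γ₁ • ((ContinuousLinearMap.adjoint Φ) (y1 n) + y2 n)) - xt (n+1)
      ∈ A (xt (n+1)) := by
    intro n
    rw [hxt n]
    exact hJres _
  have hsub1 : ∀ n, γ₂⁻¹ • ((y1 n + γ₂ • Φ ((2:ℝ) • xt (n+1) - x n)) - y1t (n+1))
      ∈ SubdiffE F1 (y1t (n+1)) :=
    fun n => aux_prox_subdiff hconv1 hbot1 hγ₂ (hy1t n).1
  have hsub2 : ∀ n, γ₂⁻¹ • ((y2 n + γ₂ • ((2:ℝ) • xt (n+1) - x n)) - y2t (n+1))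
      ∈ SubdiffE F2 (y2t (n+1)) :=
    fun n => aux_prox_subdiff hconv2 hbot2 hγ₂ (hy2t n).1
  have hfin1 : ∀ n, F1 (y1t (n+1)) ≠ ⊤ :=
    fun n => aux_prox_ne_top hbot1 (hy1t n).1 hnt1
  have hfin2 : ∀ n, F2 (y2t (n+1)) ≠ ⊤ :=
    fun n => aux_prox_ne_top hbot2 (hy2t n).1 hnt2
  -- converting a solution triple
  have hsolconv : ∀ xs y1s y2s : EuclideanSpace ℝ (Fin K),
      (∃ u ∈ A xs, (1 / γ₁) • u + (ContinuousLinearMap.adjoint Φ) y1s + y2s = 0) →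
      -γ₁ • ((ContinuousLinearMap.adjoint Φ) y1s + y2s) ∈ A xs := by
    intro xs y1s y2s ⟨u, hu, hueq⟩
    have h2 : γ₁ • ((1 / γ₁) • u + (ContinuousLinearMap.adjoint Φ) y1s + y2s)
        = γ₁ • (0 : EuclideanSpace ℝ (Fin K)) := by rw [hueq]
    have h3 : u = -γ₁ • ((ContinuousLinearMap.adjoint Φ) y1s + y2s) := by
      have h4 : γ₁ • (1 / γ₁ : ℝ) • u = u := by
        rw [smul_smul, mul_one_div, div_self hγ₁.ne', one_smul]
      simp only [smul_add, smul_zero, h4] at h2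
      have h5 : u + γ₁ • ((ContinuousLinearMap.adjoint Φ) y1s + y2s) = 0 := by
        rw [smul_add, ← add_assoc]; exact h2
      rw [neg_smul]
      exact eq_neg_of_add_eq_zero_left h5
    rw [← h3]; exact hu
  -- The Fejér inequality with respect to any solution triple
  have fejer : ∀ xs y1s y2s : EuclideanSpace ℝ (Fin K),
      -γ₁ • ((ContinuousLinearMap.adjoint Φ) y1s + y2s) ∈ A xs →
      Φ xs ∈ SubdiffE F1 y1s →
      xs ∈ SubdiffE F2 y2s →
      ∀ n, Q (x (n+1) - xs) (y1 (n+1) - y1s) (y2 (n+1) - y2s)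
        ≤ Q (x n - xs) (y1 n - y1s) (y2 n - y2s)
          - ρ n * (2 - ρ n) * Q (x n - xt (n+1)) (y1 n - y1t (n+1)) (y2 n - y2t (n+1)) := by
    intro xs y1s y2s hAs h1s h2s n
    obtain ⟨hρ0, hρ2⟩ := hρ n
    rw [hx n, hy1 n, hy2 n]
    set p : EuclideanSpace ℝ (Fin K) := x n - xs with hp
    set pt : EuclideanSpace ℝ (Fin K) := xt (n+1) - xs with hpt
    set q : EuclideanSpace ℝ (Fin K) := y1 n - y1s with hq
    set qt : EuclideanSpace ℝ (Fin K) := y1t (n+1) - y1s with hqt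
    set r : EuclideanSpace ℝ (Fin K) := y2 n - y2s with hr
    set rt : EuclideanSpace ℝ (Fin K) := y2t (n+1) - y2s with hrt
    -- first monotonicity inequality (operator A)
    have hmono1 : (0:ℝ) ≤ ⟪pt, (p - pt) - γ₁ • ((ContinuousLinearMap.adjoint Φ) q) - γ₁ • r⟫ := by
      have h0 := hA.1 (ha n) hAs
      have e1 : (x n - γ₁ • ((ContinuousLinearMap.adjoint Φ) (y1 n) + y2 n) - xt (n+1))
          - (-γ₁ • ((ContinuousLinearMap.adjoint Φ) y1s + y2s))
          = (p - pt) - γ₁ • ((ContinuousLinearMap.adjoint Φ) q) - γ₁ • r := by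
        rw [hp, hpt, hq, hr, map_sub]
        module
      rw [e1] at h0
      exact h0
    have m1 : 0 ≤ g1 * ⟪pt, p⟫ - g1 * ⟪pt, pt⟫ - ⟪Φ pt, q⟫ - ⟪pt, r⟫ := by
      have hexp : ⟪pt, (p - pt) - γ₁ • ((ContinuousLinearMap.adjoint Φ) q) - γ₁ • r⟫
          = ⟪pt, p⟫ - ⟪pt, pt⟫ - γ₁ * ⟪Φ pt, q⟫ - γ₁ * ⟪pt, r⟫ := by
        simp only [inner_sub_right, real_inner_smul_right,
          ContinuousLinearMap.adjoint_inner_right]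
      rw [hexp] at hmono1
      have h5 : 0 ≤ g1 * (⟪pt, p⟫ - ⟪pt, pt⟫ - γ₁ * ⟪Φ pt, q⟫ - γ₁ * ⟪pt, r⟫) :=
        mul_nonneg hg1.le hmono1
      have e6 : g1 * (⟪pt, p⟫ - ⟪pt, pt⟫ - γ₁ * ⟪Φ pt, q⟫ - γ₁ * ⟪pt, r⟫)
          = g1 * ⟪pt, p⟫ - g1 * ⟪pt, pt⟫ - ⟪Φ pt, q⟫ - ⟪pt, r⟫ := by
        rw [hg1def]
        field_simp
      rw [e6] at h5
      exact h5
    -- second monotonicity inequality (subdifferential of F1)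
    have m2 : 0 ≤ g2 * ⟪qt, q⟫ - g2 * ⟪qt, qt⟫ + 2 * ⟪qt, Φ pt⟫ - ⟪qt, Φ p⟫ := by
      have hpair := aux_subdiff_mono hbot1 (hsub1 n) h1s (hfin1 n)
      have e7 : γ₂⁻¹ • ((y1 n + γ₂ • Φ ((2:ℝ) • xt (n+1) - x n)) - y1t (n+1)) - Φ xs
          = γ₂⁻¹ • (q - qt) + ((2:ℝ) • Φ pt - Φ p) := by
        rw [hq, hqt, hp, hpt]
        simp only [map_sub, map_smul]
        match_scalars <;> (try field_simp) <;> try norm_num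
      rw [e7] at hpair
      have hexp : ⟪qt, γ₂⁻¹ • (q - qt) + ((2:ℝ) • Φ pt - Φ p)⟫
          = γ₂⁻¹ * ⟪qt, q⟫ - γ₂⁻¹ * ⟪qt, qt⟫ + 2 * ⟪qt, Φ pt⟫ - ⟪qt, Φ p⟫ := by
        simp only [inner_add_right, inner_sub_right, real_inner_smul_right]
        ring
      rw [hexp] at hpair
      rw [hg2def]
      exact hpair
    -- third monotonicity inequality (subdifferential of F2)
    have m3 : 0 ≤ g2 * ⟪rt, r⟫ - g2 * ⟪rt, rt⟫ + 2 * ⟪rt, pt⟫ - ⟪rt, p⟫ := by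
      have hpair := aux_subdiff_mono hbot2 (hsub2 n) h2s (hfin2 n)
      have e8 : γ₂⁻¹ • ((y2 n + γ₂ • ((2:ℝ) • xt (n+1) - x n)) - y2t (n+1)) - xs
          = γ₂⁻¹ • (r - rt) + ((2:ℝ) • pt - p) := by
        rw [hr, hrt, hp, hpt]
        match_scalars <;> (try field_simp) <;> try norm_num
      rw [e8] at hpair
      have hexp : ⟪rt, γ₂⁻¹ • (r - rt) + ((2:ℝ) • pt - p)⟫
          = γ₂⁻¹ * ⟪rt, r⟫ - γ₂⁻¹ * ⟪rt, rt⟫ + 2 * ⟪rt, pt⟫ - ⟪rt, p⟫ := by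
        simp only [inner_add_right, inner_sub_right, real_inner_smul_right]
        ring
      rw [hexp] at hpair
      rw [hg2def]
      exact hpair
    -- combine
    have hM : 0 ≤ 2 * ρ n * ((g1 * ⟪pt, p⟫ - g1 * ⟪pt, pt⟫ - ⟪Φ pt, q⟫ - ⟪pt, r⟫)
        + (g2 * ⟪qt, q⟫ - g2 * ⟪qt, qt⟫ + 2 * ⟪qt, Φ pt⟫ - ⟪qt, Φ p⟫)
        + (g2 * ⟪rt, r⟫ - g2 * ⟪rt, rt⟫ + 2 * ⟪rt, pt⟫ - ⟪rt, p⟫)) := by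
      apply mul_nonneg (by linarith)
      linarith [m1, m2, m3]
    have egoal1 : ρ n • xt (n + 1) + (1 - ρ n) • x n - xs = p - ρ n • (p - pt) := by
      rw [hp, hpt]; module
    have egoal2 : ρ n • y1t (n + 1) + (1 - ρ n) • y1 n - y1s = q - ρ n • (q - qt) := by
      rw [hq, hqt]; module
    have egoal3 : ρ n • y2t (n + 1) + (1 - ρ n) • y2 n - y2s = r - ρ n • (r - rt) := by
      rw [hr, hrt]; module
    have egoal4 : x n - xt (n + 1) = p - pt := by rw [hp, hpt]; abel
    have egoal5 : y1 n - y1t (n + 1) = q - qt := by rw [hq, hqt]; abel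
    have egoal6 : y2 n - y2t (n + 1) = r - rt := by rw [hr, hrt]; abel
    rw [egoal1, egoal2, egoal3, egoal4, egoal5, egoal6]
    simp only [hQdef]
    simp only [inner_sub_left, inner_sub_right, real_inner_smul_left, real_inner_smul_right,
      map_sub, map_smul]
    simp only [real_inner_comm pt p, real_inner_comm qt q, real_inner_comm rt r,
      real_inner_comm q (Φ p), real_inner_comm q (Φ pt), real_inner_comm qt (Φ p),
      real_inner_comm qt (Φ pt), real_inner_comm r p, real_inner_comm r pt,
      real_inner_comm rt p, real_inner_comm rt pt] at hM ⊢
    linarith [hM]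
  -- solution triple membership facts
  have hAh : -γ₁ • ((ContinuousLinearMap.adjoint Φ) y1h + y2h) ∈ A xh :=
    hsolconv xh y1h y2h hsolA
  have h1h : Φ xh ∈ SubdiffE F1 y1h := by
    obtain ⟨w, hw, hweq⟩ := hsolD
    have : w = Φ xh := by
      have := neg_add_eq_zero.mp hweq
      exact this.symm
    rwa [this] at hw
  have h2h : xh ∈ SubdiffE F2 y2h := by
    obtain ⟨w, hw, hweq⟩ := hsolC
    have : w = xh := by
      have := neg_add_eq_zero.mp hweq
      exact this.symm
    rwa [this] at hw
  -- Fejér monotone quantities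
  set sq : ℕ → ℝ := fun n => Q (x n - xt (n+1)) (y1 n - y1t (n+1)) (y2 n - y2t (n+1))
    with hsqdef
  set d : ℕ → ℝ := fun n => Q (x n - xh) (y1 n - y1h) (y2 n - y2h) with hddef
  have hfej := fejer xh y1h y2h hAh h1h h2h
  have hd : ∀ n, d (n+1) ≤ d n - ρ n * (2 - ρ n) * sq n := by
    intro n
    simp only [hddef, hsqdef]
    exact hfej n
  have hsqnn : ∀ n, 0 ≤ sq n := by
    intro n; simp only [hsqdef]; exact Qnn _ _ _
  have hdnn : ∀ n, 0 ≤ d n := by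
    intro n; simp only [hddef]; exact Qnn _ _ _
  have hρnn : ∀ n, 0 ≤ ρ n * (2 - ρ n) := by
    intro n
    obtain ⟨h1, h2⟩ := hρ n
    nlinarith
  have hdrop : ∀ n, d (n + 1) ≤ d n := by
    intro n
    have := hd n
    nlinarith [mul_nonneg (hρnn n) (hsqnn n)]
  have hdle : ∀ n, d n ≤ d 0 := fun n => antitone_nat_of_succ_le hdrop (Nat.zero_le n)
  have hsum : ∀ Nn, ∑ n ∈ Finset.range Nn, (ρ n * (2 - ρ n)) * sq n ≤ d 0 := by
    intro Nn
    have htel : ∀ m, ∑ n ∈ Finset.range m, (ρ n * (2 - ρ n)) * sq n ≤ d 0 - d m := by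
      intro m
      induction m with
      | zero => simp
      | succ k ih =>
        rw [Finset.sum_range_succ]
        have := hd k
        linarith
    linarith [htel Nn, hdnn Nn]
  obtain ⟨ψ, hψmono, hψlim⟩ := aux_seq_subseq_zero hsqnn hρnn hsum hρsum
  -- boundedness of the iterates
  have hcomp : ∀ n, α * ‖x n - xh‖ ^ 2 ≤ d n ∧ β * ‖y1 n - y1h‖ ^ 2 ≤ d n ∧
      β * ‖y2 n - y2h‖ ^ 2 ≤ d n := by
    intro n
    have hql := Qlower (x n - xh) (y1 n - y1h) (y2 n - y2h)
    have h1 := mul_nonneg hαpos.le (sq_nonneg ‖x n - xh‖)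
    have h2 := mul_nonneg hβpos.le (sq_nonneg ‖y1 n - y1h‖)
    have h3 := mul_nonneg hβpos.le (sq_nonneg ‖y2 n - y2h‖)
    have hdn : Q (x n - xh) (y1 n - y1h) (y2 n - y2h) = d n := by simp only [hddef]
    rw [hdn] at hql
    exact ⟨by linarith, by linarith, by linarith⟩
  have hRx : ∀ n, x n ∈ Metric.closedBall xh (Real.sqrt (d 0 / α)) := by
    intro n
    rw [Metric.mem_closedBall, dist_eq_norm]
    rw [show ‖x n - xh‖ = Real.sqrt (‖x n - xh‖ ^ 2) from (Real.sqrt_sq (norm_nonneg _)).symm]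
    apply Real.sqrt_le_sqrt
    rw [le_div_iff₀ hαpos]
    calc ‖x n - xh‖ ^ 2 * α = α * ‖x n - xh‖ ^ 2 := by ring
      _ ≤ d n := (hcomp n).1
      _ ≤ d 0 := hdle n
  have hRy1 : ∀ n, y1 n ∈ Metric.closedBall y1h (Real.sqrt (d 0 / β)) := by
    intro n
    rw [Metric.mem_closedBall, dist_eq_norm]
    rw [show ‖y1 n - y1h‖ = Real.sqrt (‖y1 n - y1h‖ ^ 2) from (Real.sqrt_sq (norm_nonneg _)).symm]
    apply Real.sqrt_le_sqrt
    rw [le_div_iff₀ hβpos]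
    calc ‖y1 n - y1h‖ ^ 2 * β = β * ‖y1 n - y1h‖ ^ 2 := by ring
      _ ≤ d n := (hcomp n).2.1
      _ ≤ d 0 := hdle n
  have hRy2 : ∀ n, y2 n ∈ Metric.closedBall y2h (Real.sqrt (d 0 / β)) := by
    intro n
    rw [Metric.mem_closedBall, dist_eq_norm]
    rw [show ‖y2 n - y2h‖ = Real.sqrt (‖y2 n - y2h‖ ^ 2) from (Real.sqrt_sq (norm_nonneg _)).symm]
    apply Real.sqrt_le_sqrt
    rw [le_div_iff₀ hβpos]
    calc ‖y2 n - y2h‖ ^ 2 * β = β * ‖y2 n - y2h‖ ^ 2 := by ring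
      _ ≤ d n := (hcomp n).2.2
      _ ≤ d 0 := hdle n
  -- Bolzano–Weierstrass extractions
  obtain ⟨xbar, -, φ₁, hφ₁, hx1⟩ := tendsto_subseq_of_bounded
    Metric.isBounded_closedBall (fun k => hRx (ψ k))
  obtain ⟨y1bar, -, φ₂, hφ₂, hy12⟩ := tendsto_subseq_of_bounded
    Metric.isBounded_closedBall (fun k => hRy1 (ψ (φ₁ k)))
  obtain ⟨y2bar, -, φ₃, hφ₃, hy23⟩ := tendsto_subseq_of_bounded
    Metric.isBounded_closedBall (fun k => hRy2 (ψ (φ₁ (φ₂ k))))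
  set η : ℕ → ℕ := fun k => ψ (φ₁ (φ₂ (φ₃ k))) with hηdef
  have hηmono : StrictMono η := hψmono.comp (hφ₁.comp (hφ₂.comp hφ₃))
  have hxη : Tendsto (fun k => x (η k)) atTop (𝓝 xbar) := by
    have := hx1.comp ((hφ₂.comp hφ₃).tendsto_atTop)
    exact this
  have hy1η : Tendsto (fun k => y1 (η k)) atTop (𝓝 y1bar) := by
    have := hy12.comp (hφ₃.tendsto_atTop)
    exact this
  have hy2η : Tendsto (fun k => y2 (η k)) atTop (𝓝 y2bar) := hy23
  have hsqη : Tendsto (fun k => sq (η k)) atTop (𝓝 0) := by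
    have := hψlim.comp ((hφ₁.comp (hφ₂.comp hφ₃)).tendsto_atTop)
    exact this
  -- residuals tend to zero along η
  have hres : ∀ (v : ℕ → EuclideanSpace ℝ (Fin K)) (c : ℝ), 0 < c →
      (∀ k, c * ‖v k‖ ^ 2 ≤ sq (η k)) → Tendsto v atTop (𝓝 0) := by
    intro v c hc hv
    apply aux_tendsto_zero_of_inner
    apply squeeze_zero (fun k => real_inner_self_nonneg) (g := fun k => sq (η k) / c)
    · intro k
      rw [real_inner_self_eq_norm_sq, le_div_iff₀ hc]
      nlinarith [hv k]
    · have := hsqη.div_const c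
      rwa [zero_div] at this
  have hu1 : Tendsto (fun k => x (η k) - xt (η k + 1)) atTop (𝓝 0) := by
    apply hres _ α hαpos
    intro k
    have hql := Qlower (x (η k) - xt (η k + 1)) (y1 (η k) - y1t (η k + 1))
      (y2 (η k) - y2t (η k + 1))
    have heq : Q (x (η k) - xt (η k + 1)) (y1 (η k) - y1t (η k + 1))
        (y2 (η k) - y2t (η k + 1)) = sq (η k) := by simp only [hsqdef]
    rw [heq] at hql
    nlinarith [mul_nonneg hβpos.le (sq_nonneg ‖y1 (η k) - y1t (η k + 1)‖),
      mul_nonneg hβpos.le (sq_nonneg ‖y2 (η k) - y2t (η k + 1)‖)]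
  have hu2 : Tendsto (fun k => y1 (η k) - y1t (η k + 1)) atTop (𝓝 0) := by
    apply hres _ β hβpos
    intro k
    have hql := Qlower (x (η k) - xt (η k + 1)) (y1 (η k) - y1t (η k + 1))
      (y2 (η k) - y2t (η k + 1))
    have heq : Q (x (η k) - xt (η k + 1)) (y1 (η k) - y1t (η k + 1))
        (y2 (η k) - y2t (η k + 1)) = sq (η k) := by simp only [hsqdef]
    rw [heq] at hql
    nlinarith [mul_nonneg hαpos.le (sq_nonneg ‖x (η k) - xt (η k + 1)‖),
      mul_nonneg hβpos.le (sq_nonneg ‖y2 (η k) - y2t (η k + 1)‖)]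
  have hu3 : Tendsto (fun k => y2 (η k) - y2t (η k + 1)) atTop (𝓝 0) := by
    apply hres _ β hβpos
    intro k
    have hql := Qlower (x (η k) - xt (η k + 1)) (y1 (η k) - y1t (η k + 1))
      (y2 (η k) - y2t (η k + 1))
    have heq : Q (x (η k) - xt (η k + 1)) (y1 (η k) - y1t (η k + 1))
        (y2 (η k) - y2t (η k + 1)) = sq (η k) := by simp only [hsqdef]
    rw [heq] at hql
    nlinarith [mul_nonneg hαpos.le (sq_nonneg ‖x (η k) - xt (η k + 1)‖),
      mul_nonneg hβpos.le (sq_nonneg ‖y1 (η k) - y1t (η k + 1)‖)]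
  have hxtη : Tendsto (fun k => xt (η k + 1)) atTop (𝓝 xbar) := by
    have h := hxη.sub hu1
    rw [sub_zero] at h
    have he : (fun k => x (η k) - (x (η k) - xt (η k + 1))) = fun k => xt (η k + 1) := by
      funext k; abel
    rwa [he] at h
  have hy1tη : Tendsto (fun k => y1t (η k + 1)) atTop (𝓝 y1bar) := by
    have h := hy1η.sub hu2
    rw [sub_zero] at h
    have he : (fun k => y1 (η k) - (y1 (η k) - y1t (η k + 1))) = fun k => y1t (η k + 1) := by
      funext k; abel
    rwa [he] at h
  have hy2tη : Tendsto (fun k => y2t (η k + 1)) atTop (𝓝 y2bar) := by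
    have h := hy2η.sub hu3
    rw [sub_zero] at h
    have he : (fun k => y2 (η k) - (y2 (η k) - y2t (η k + 1))) = fun k => y2t (η k + 1) := by
      funext k; abel
    rwa [he] at h
  -- the cluster point is a solution
  have hAbar : -γ₁ • ((ContinuousLinearMap.adjoint Φ) y1bar + y2bar) ∈ A xbar := by
    have hak : Tendsto (fun k => (x (η k)
        - γ₁ • ((ContinuousLinearMap.adjoint Φ) (y1 (η k)) + y2 (η k))) - xt (η k + 1))
        atTop (𝓝 ((xbar - γ₁ • ((ContinuousLinearMap.adjoint Φ) y1bar + y2bar)) - xbar)) := by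
      apply Tendsto.sub _ hxtη
      apply Tendsto.sub hxη
      apply Tendsto.const_smul
      exact ((((ContinuousLinearMap.adjoint Φ)).continuous.tendsto y1bar).comp hy1η).add hy2η
    have h := aux_mm_seq_closed hA (fun k => ha (η k)) hxtη hak
    have heq : (xbar - γ₁ • ((ContinuousLinearMap.adjoint Φ) y1bar + y2bar)) - xbar
        = -γ₁ • ((ContinuousLinearMap.adjoint Φ) y1bar + y2bar) := by module
    rwa [heq] at h
  have hF1bar : Φ xbar ∈ SubdiffE F1 y1bar := by
    have huk : Tendsto (fun k => γ₂⁻¹ • ((y1 (η k)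
        + γ₂ • Φ ((2:ℝ) • xt (η k + 1) - x (η k))) - y1t (η k + 1)))
        atTop (𝓝 (γ₂⁻¹ • ((y1bar + γ₂ • Φ ((2:ℝ) • xbar - xbar)) - y1bar))) := by
      apply Tendsto.const_smul
      apply Tendsto.sub _ hy1tη
      apply Tendsto.add hy1η
      apply Tendsto.const_smul
      exact (Φ.continuous.tendsto _).comp ((hxtη.const_smul (2:ℝ)).sub hxη)
    have hL : γ₂⁻¹ • ((y1bar + γ₂ • Φ ((2:ℝ) • xbar - xbar)) - y1bar) = Φ xbar := by
      simp only [map_sub, map_smul]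
      match_scalars <;> (try field_simp) <;> try norm_num
    rw [hL] at huk
    exact aux_subdiff_seq_closed hlsc1 hbot1 (fun k => hsub1 (η k)) hy1tη huk
  have hF2bar : xbar ∈ SubdiffE F2 y2bar := by
    have huk : Tendsto (fun k => γ₂⁻¹ • ((y2 (η k)
        + γ₂ • ((2:ℝ) • xt (η k + 1) - x (η k))) - y2t (η k + 1)))
        atTop (𝓝 (γ₂⁻¹ • ((y2bar + γ₂ • ((2:ℝ) • xbar - xbar)) - y2bar))) := by
      apply Tendsto.const_smul
      apply Tendsto.sub _ hy2tη
      apply Tendsto.add hy2η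
      apply Tendsto.const_smul
      exact (hxtη.const_smul (2:ℝ)).sub hxη
    have hL : γ₂⁻¹ • ((y2bar + γ₂ • ((2:ℝ) • xbar - xbar)) - y2bar) = xbar := by
      match_scalars <;> (try field_simp) <;> try norm_num
    rw [hL] at huk
    exact aux_subdiff_seq_closed hlsc2 hbot2 (fun k => hsub2 (η k)) hy2tη huk
  -- Fejér monotonicity with respect to the cluster point gives convergence
  set db : ℕ → ℝ := fun n => Q (x n - xbar) (y1 n - y1bar) (y2 n - y2bar) with hdbdef
  have hfej2 := fejer xbar y1bar y2bar hAbar hF1bar hF2bar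
  have hdbnn : ∀ n, 0 ≤ db n := fun n => by simp only [hdbdef]; exact Qnn _ _ _
  have hdbdrop : ∀ n, db (n + 1) ≤ db n := by
    intro n
    have h := hfej2 n
    have heq : Q (x n - xt (n+1)) (y1 n - y1t (n+1)) (y2 n - y2t (n+1)) = sq n := by
      simp only [hsqdef]
    rw [heq] at h
    have hq1 : db (n+1) = Q (x (n+1) - xbar) (y1 (n+1) - y1bar) (y2 (n+1) - y2bar) := by
      simp only [hdbdef]
    have hq2 : db n = Q (x n - xbar) (y1 n - y1bar) (y2 n - y2bar) := by
      simp only [hdbdef]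
    rw [hq1, hq2]
    nlinarith [mul_nonneg (hρnn n) (hsqnn n)]
  have hv1 : Tendsto (fun k => x (η k) - xbar) atTop (𝓝 0) := by
    have := hxη.sub (tendsto_const_nhds (x := xbar))
    rwa [sub_self] at this
  have hv2 : Tendsto (fun k => y1 (η k) - y1bar) atTop (𝓝 0) := by
    have := hy1η.sub (tendsto_const_nhds (x := y1bar))
    rwa [sub_self] at this
  have hv3 : Tendsto (fun k => y2 (η k) - y2bar) atTop (𝓝 0) := by
    have := hy2η.sub (tendsto_const_nhds (x := y2bar))
    rwa [sub_self] at this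
  have hdbη : Tendsto (fun k => db (η k)) atTop (𝓝 0) := by
    simp only [hdbdef, hQdef]
    have hΦv : Tendsto (fun k => Φ (x (η k) - xbar)) atTop (𝓝 (Φ 0)) :=
      (Φ.continuous.tendsto _).comp hv1
    have hbig := ((((tendsto_const_nhds (x := g1)).mul (hv1.inner hv1)).add
        ((tendsto_const_nhds (x := g2)).mul (hv2.inner hv2))).add
        ((tendsto_const_nhds (x := g2)).mul (hv3.inner hv3))).sub
        (((tendsto_const_nhds (x := (2:ℝ))).mul (hΦv.inner hv2)).add
          ((tendsto_const_nhds (x := (2:ℝ))).mul (hv1.inner hv3)))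
    have hre : (fun k => g1 * ⟪x (η k) - xbar, x (η k) - xbar⟫
        + g2 * ⟪y1 (η k) - y1bar, y1 (η k) - y1bar⟫
        + g2 * ⟪y2 (η k) - y2bar, y2 (η k) - y2bar⟫
        - 2 * ⟪Φ (x (η k) - xbar), y1 (η k) - y1bar⟫
        - 2 * ⟪x (η k) - xbar, y2 (η k) - y2bar⟫)
        = fun k => (g1 * ⟪x (η k) - xbar, x (η k) - xbar⟫
        + g2 * ⟪y1 (η k) - y1bar, y1 (η k) - y1bar⟫
        + g2 * ⟪y2 (η k) - y2bar, y2 (η k) - y2bar⟫)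
        - (2 * ⟪Φ (x (η k) - xbar), y1 (η k) - y1bar⟫
          + 2 * ⟪x (η k) - xbar, y2 (η k) - y2bar⟫) := by
      funext k; ring
    rw [hre]
    simpa using hbig
  have hdb0 : Tendsto db atTop (𝓝 0) := aux_antitone_subseq_zero hdbnn hdbdrop hηmono hdbη
  -- componentwise convergence of the full sequences
  have hxlim : Tendsto x atTop (𝓝 xbar) := by
    have hvx : Tendsto (fun n => x n - xbar) atTop (𝓝 0) := by
      apply aux_tendsto_zero_of_inner
      apply squeeze_zero (fun n => real_inner_self_nonneg) (g := fun n => db n / α)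
      · intro n
        rw [real_inner_self_eq_norm_sq, le_div_iff₀ hαpos]
        have hql := Qlower (x n - xbar) (y1 n - y1bar) (y2 n - y2bar)
        have heq : Q (x n - xbar) (y1 n - y1bar) (y2 n - y2bar) = db n := by
          simp only [hdbdef]
        rw [heq] at hql
        nlinarith [mul_nonneg hβpos.le (sq_nonneg ‖y1 n - y1bar‖),
          mul_nonneg hβpos.le (sq_nonneg ‖y2 n - y2bar‖)]
      · have := hdb0.div_const α
        rwa [zero_div] at this
    have h := hvx.add_const xbar
    rw [zero_add] at h
    have he : (fun n => x n - xbar + xbar) = x := by funext n; abel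
    rwa [he] at h
  have hy1lim : Tendsto y1 atTop (𝓝 y1bar) := by
    have hvx : Tendsto (fun n => y1 n - y1bar) atTop (𝓝 0) := by
      apply aux_tendsto_zero_of_inner
      apply squeeze_zero (fun n => real_inner_self_nonneg) (g := fun n => db n / β)
      · intro n
        rw [real_inner_self_eq_norm_sq, le_div_iff₀ hβpos]
        have hql := Qlower (x n - xbar) (y1 n - y1bar) (y2 n - y2bar)
        have heq : Q (x n - xbar) (y1 n - y1bar) (y2 n - y2bar) = db n := by
          simp only [hdbdef]
        rw [heq] at hql
        nlinarith [mul_nonneg hαpos.le (sq_nonneg ‖x n - xbar‖),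
          mul_nonneg hβpos.le (sq_nonneg ‖y2 n - y2bar‖)]
      · have := hdb0.div_const β
        rwa [zero_div] at this
    have h := hvx.add_const y1bar
    rw [zero_add] at h
    have he : (fun n => y1 n - y1bar + y1bar) = y1 := by funext n; abel
    rwa [he] at h
  have hy2lim : Tendsto y2 atTop (𝓝 y2bar) := by
    have hvx : Tendsto (fun n => y2 n - y2bar) atTop (𝓝 0) := by
      apply aux_tendsto_zero_of_inner
      apply squeeze_zero (fun n => real_inner_self_nonneg) (g := fun n => db n / β)
      · intro n
        rw [real_inner_self_eq_norm_sq, le_div_iff₀ hβpos]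
        have hql := Qlower (x n - xbar) (y1 n - y1bar) (y2 n - y2bar)
        have heq : Q (x n - xbar) (y1 n - y1bar) (y2 n - y2bar) = db n := by
          simp only [hdbdef]
        rw [heq] at hql
        nlinarith [mul_nonneg hαpos.le (sq_nonneg ‖x n - xbar‖),
          mul_nonneg hβpos.le (sq_nonneg ‖y1 n - y1bar‖)]
      · have := hdb0.div_const β
        rwa [zero_div] at this
    have h := hvx.add_const y2bar
    rw [zero_add] at h
    have he : (fun n => y2 n - y2bar + y2bar) = y2 := by funext n; abel
    rwa [he] at h
  refine ⟨xbar, y1bar, y2bar, hxlim, hy1lim, hy2lim,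
    ⟨-γ₁ • ((ContinuousLinearMap.adjoint Φ) y1bar + y2bar), hAbar, ?_⟩,
    ⟨Φ xbar, hF1bar, ?_⟩, ⟨xbar, hF2bar, ?_⟩⟩
  · have hsm : (1 / γ₁ : ℝ) • (-γ₁ • ((ContinuousLinearMap.adjoint Φ) y1bar + y2bar))
        = -((ContinuousLinearMap.adjoint Φ) y1bar + y2bar) := by
      rw [smul_smul, show (1 / γ₁) * -γ₁ = -1 by field_simp, neg_one_smul]
    rw [hsm]
    abel
  · exact neg_add_cancel _
  · exact neg_add_cancel _

end
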